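/- For any parameters L > 0, c ≤ 0, M > 0 and μ_s > 0, there exists a function m_S : ℝ → ℝ belonging to H¹(ℝ) ∩ C¹(ℝ), solving −c m_S′ − m_S″ + μ_s m_S = M·1_{(0,L)} weakly on ℝ (hence classically on ℝ \ {0, L}), and satisfying: (i) 0 ≤ m_S(x) ≤ M/μ_s for all x; (ii) m_S(x) → 0 as x → ±∞; (iii) there exists x₀ ∈ (0, L) such that m_S is increasing on (−∞, x₀) and decreasing on (x₀, +∞). -/

import Mathlib

open Filter Set MeasureTheory

/-! Auxiliary gluing lemmas -/

private lemma continuous_glue {g h : ℝ → ℝ} {p : ℝ} (hg : Continuous g) (hh : Continuous h)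
    (hv : g p = h p) : Continuous fun y => if y ≤ p then g y else h y :=
  hg.if_le hh continuous_id continuous_const (by rintro y rfl; exact hv)

private lemma hasDerivAt_glue {g h g' h' : ℝ → ℝ} {p : ℝ}
    (hg : ∀ x, HasDerivAt g (g' x) x) (hh : ∀ x, HasDerivAt h (h' x) x)
    (hv : g p = h p) (hd : g' p = h' p) (x : ℝ) :
    HasDerivAt (fun y => if y ≤ p then g y else h y)
      (if x ≤ p then g' x else h' x) x := by
  rcases lt_trichotomy x p with hx | hx | hx
  · have hev : (fun y => if y ≤ p then g y else h y) =ᶠ[nhds x] g := by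
      filter_upwards [Iio_mem_nhds hx] with y hy
      rw [if_pos (le_of_lt (mem_Iio.mp hy))]
    rw [if_pos hx.le]
    exact hev.hasDerivAt_iff.mpr (hg x)
  · subst hx
    rw [if_pos le_rfl]
    have h1 : HasDerivWithinAt (fun y => if y ≤ x then g y else h y) (g' x) (Iic x) x := by
      refine ((hg x).hasDerivWithinAt).congr (fun y hy => ?_) (by rw [if_pos le_rfl])
      rw [if_pos (mem_Iic.mp hy)]
    have h2 : HasDerivWithinAt (fun y => if y ≤ x then g y else h y) (g' x) (Ici x) x := by
      rw [hd]
      refine ((hh x).hasDerivWithinAt).congr (fun y hy => ?_) (by rw [if_pos le_rfl]; exact hv)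
      by_cases hyx : y ≤ x
      · have : y = x := le_antisymm hyx (mem_Ici.mp hy)
        rw [if_pos hyx, this, hv]
      · rw [if_neg hyx]
    exact (h1.union h2).hasDerivAt (by rw [Iic_union_Ici]; exact univ_mem)
  · have hev : (fun y => if y ≤ p then g y else h y) =ᶠ[nhds x] h := by
      filter_upwards [Ioi_mem_nhds hx] with y hy
      rw [if_neg (not_le.mpr (mem_Ioi.mp hy))]
    rw [if_neg (not_le.mpr hx)]
    exact hev.hasDerivAt_iff.mpr (hh x)

private lemma hasDerivAt_exp_mul (k x : ℝ) :
    HasDerivAt (fun y => Real.exp (k * y)) (k * Real.exp (k * x)) x := by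
  have h : HasDerivAt (fun y : ℝ => k * y) k x := by
    simpa using (hasDerivAt_id x).const_mul k
  simpa [mul_comm] using h.exp

private lemma hasDerivAt_exp_lin (k d x : ℝ) :
    HasDerivAt (fun y => Real.exp (k * y - d)) (k * Real.exp (k * x - d)) x := by
  have h : HasDerivAt (fun y : ℝ => k * y - d) k x := by
    simpa using ((hasDerivAt_id x).const_mul k).sub_const d
  simpa [mul_comm] using h.exp

private lemma st15_integrableOn_exp_Iic (b : ℝ) (hb : 0 < b) :
    IntegrableOn (fun x : ℝ => Real.exp (b * x)) (Iic (0:ℝ)) := by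
  rw [← (Measure.measurePreserving_neg (volume : Measure ℝ)).integrableOn_comp_preimage
      (Homeomorph.neg ℝ).measurableEmbedding]
  simp only [Function.comp_def, neg_preimage, neg_Iic, neg_zero]
  have h : IntegrableOn (fun x : ℝ => Real.exp (-b * x)) (Ici 0) :=
    (integrableOn_Ici_iff_integrableOn_Ioi).mpr (exp_neg_integrableOn_Ioi 0 hb)
  exact h.congr_fun (fun x _ => by ring_nf) measurableSet_Ici


private lemma st15_tail_left (K k : ℝ) (hk : 0 < k) :
    IntegrableOn (fun x : ℝ => (K * Real.exp (k * x)) ^ 2) (Iic (0:ℝ)) := by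
  have h : IntegrableOn (fun x : ℝ => K^2 * Real.exp (2*k*x)) (Iic (0:ℝ)) :=
    (st15_integrableOn_exp_Iic (2*k) (by linarith)).const_mul (K^2)
  refine h.congr_fun (fun x _ => ?_) measurableSet_Iic
  have h1 : Real.exp (2*k*x) = Real.exp (k*x) * Real.exp (k*x) := by
    rw [← Real.exp_add]; congr 1; ring
  beta_reduce
  rw [h1]; ring

private lemma st15_tail_right (K k a b : ℝ) (hk : k < 0) :
    IntegrableOn (fun x : ℝ => (K * Real.exp (k * x - a)) ^ 2) (Ioi b) := by
  have h : IntegrableOn (fun x : ℝ => K^2 * Real.exp (-(2*a)) * Real.exp (-(-(2*k)) * x)) (Ioi b) :=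
    (exp_neg_integrableOn_Ioi b (show (0:ℝ) < -(2*k) by linarith)).const_mul
      (K^2 * Real.exp (-(2*a)))
  refine h.congr_fun (fun x _ => ?_) measurableSet_Ioi
  have h1 : K^2 * Real.exp (-(2*a)) * Real.exp (-(-(2*k)) * x)
      = K^2 * (Real.exp (k*x - a) * Real.exp (k*x - a)) := by
    rw [mul_assoc, ← Real.exp_add, ← Real.exp_add]
    congr 1
    congr 1
    ring
  beta_reduce
  rw [h1]; ring

set_option maxHeartbeats 1600000 in
/-- existence and properties of the sterile-male density `m_S`, solving
`−c m_S' − m_S'' + μ_s m_S = M·1_{(0,L)}`: it belongs to `H¹(ℝ) ∩ C¹(ℝ)`, satisfies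
`0 ≤ m_S ≤ M/μ_s`, vanishes at `±∞`, and is increasing then decreasing around some
`x₀ ∈ (0, L)`. -/
theorem stmt15 (c L M μs : ℝ) (hc : c ≤ 0) (hL : 0 < L) (hM : 0 < M) (hμs : 0 < μs) :
    ∃ mS : ℝ → ℝ,
      ContDiff ℝ 1 mS ∧
      MemLp mS 2 (volume : Measure ℝ) ∧
      MemLp (deriv mS) 2 (volume : Measure ℝ) ∧
      (∀ x : ℝ, x ≠ 0 → x ≠ L →
        ContDiffAt ℝ 2 mS x ∧
        -c * deriv mS x - deriv (deriv mS) x + μs * mS x =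
          Set.indicator (Set.Ioo (0:ℝ) L) (fun _ => M) x) ∧
      (∀ x : ℝ, 0 ≤ mS x ∧ mS x ≤ M / μs) ∧
      Tendsto mS atBot (nhds 0) ∧ Tendsto mS atTop (nhds 0) ∧
      ∃ x₀ ∈ Set.Ioo (0:ℝ) L, StrictMonoOn mS (Set.Iio x₀) ∧ StrictAntiOn mS (Set.Ioi x₀) := by
  -- roots of the characteristic polynomial
  obtain ⟨r, s, hr, hs, hsum, hprod⟩ :
      ∃ r s : ℝ, 0 < r ∧ s < 0 ∧ r + s = -c ∧ r * s = -μs := by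
    set d := Real.sqrt (c^2 + 4*μs) with hd
    have hd2 : d^2 = c^2 + 4*μs := Real.sq_sqrt (by positivity)
    have hd0 : 0 ≤ d := Real.sqrt_nonneg _
    have hdc : -c < d := by nlinarith
    refine ⟨(-c + d)/2, (-c - d)/2, by nlinarith, by nlinarith, by ring, ?_⟩
    have : ((-c + d)/2) * ((-c - d)/2) = (c^2 - d^2)/4 := by ring
    rw [this, hd2]; ring
  have hd : 0 < r - s := by linarith
  have hrne : r ≠ 0 := ne_of_gt hr
  have hsne : s ≠ 0 := ne_of_lt hs
  have hdne : r - s ≠ 0 := ne_of_gt hd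
  have hc2 : c = -(r + s) := by linarith
  have hmu2 : μs = -(r * s) := by linarith
  -- the pieces and their derivatives
  set p1 : ℝ → ℝ := fun x => M/(r*(r-s)) * (1 - Real.exp (-(r*L))) * Real.exp (r*x) with hp1def
  set p2 : ℝ → ℝ := fun x => M/((-s)*(r-s)) * (1 - Real.exp (s*x))
      + M/(r*(r-s)) * (1 - Real.exp (r*x - r*L)) with hp2def
  set p3 : ℝ → ℝ := fun x => M/((-s)*(r-s)) * (1 - Real.exp (s*L)) * Real.exp (s*x - s*L) with hp3def
  set q1 : ℝ → ℝ := fun x => M/(r-s) * (1 - Real.exp (-(r*L))) * Real.exp (r*x) with hq1def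
  set q2 : ℝ → ℝ := fun x => M/(r-s) * Real.exp (s*x) - M/(r-s) * Real.exp (r*x - r*L) with hq2def
  set q3 : ℝ → ℝ := fun x => -(M/(r-s)) * (1 - Real.exp (s*L)) * Real.exp (s*x - s*L) with hq3def
  have hder1 : ∀ x, HasDerivAt p1 (q1 x) x := by
    intro x
    have h := (hasDerivAt_exp_mul r x).const_mul (M/(r*(r-s)) * (1 - Real.exp (-(r*L))))
    rw [hp1def, hq1def]
    refine h.congr_deriv ?_
    beta_reduce
    field_simp
  have hder2 : ∀ x, HasDerivAt p2 (q2 x) x := by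
    intro x
    have h1 := ((hasDerivAt_exp_mul s x).const_sub 1).const_mul (M/((-s)*(r-s)))
    have h2 := ((hasDerivAt_exp_lin r (r*L) x).const_sub 1).const_mul (M/(r*(r-s)))
    have h := h1.add h2
    rw [hp2def, hq2def]
    refine h.congr_deriv ?_
    beta_reduce
    field_simp
    ring
  have hder3 : ∀ x, HasDerivAt p3 (q3 x) x := by
    intro x
    have h := (hasDerivAt_exp_lin s (s*L) x).const_mul
      (M/((-s)*(r-s)) * (1 - Real.exp (s*L)))
    rw [hp3def, hq3def]
    refine h.congr_deriv ?_
    beta_reduce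
    field_simp
  -- matching at the junctions
  have hv0 : p1 0 = p2 0 := by
    rw [hp1def, hp2def]
    simp [mul_zero, zero_sub]
  have hd0 : q1 0 = q2 0 := by
    rw [hq1def, hq2def]
    simp [mul_zero, zero_sub]
    ring
  have hvL : p2 L = p3 L := by
    rw [hp2def, hp3def]
    simp [sub_self]
  have hdL : q2 L = q3 L := by
    rw [hq2def, hq3def]
    simp [sub_self]
    ring
  -- the glued function and its derivative
  set F : ℝ → ℝ := fun x => if x ≤ (0:ℝ) then p1 x else if x ≤ L then p2 x else p3 x with hFdef
  set G : ℝ → ℝ := fun x => if x ≤ (0:ℝ) then q1 x else if x ≤ L then q2 x else q3 x with hGdef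
  have hFderiv : ∀ x, HasDerivAt F (G x) x := by
    intro x
    have hv : p1 0 = if (0:ℝ) ≤ L then p2 0 else p3 0 := by rw [if_pos hL.le]; exact hv0
    have hdd : q1 0 = if (0:ℝ) ≤ L then q2 0 else q3 0 := by rw [if_pos hL.le]; exact hd0
    exact hasDerivAt_glue hder1 (hasDerivAt_glue hder2 hder3 hvL hdL) hv hdd x
  have hFdiff : Differentiable ℝ F := fun x => (hFderiv x).differentiableAt
  have hderivF : deriv F = G := funext fun x => (hFderiv x).deriv
  have hcq1 : Continuous q1 := by rw [hq1def]; fun_prop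
  have hcq2 : Continuous q2 := by rw [hq2def]; fun_prop
  have hcq3 : Continuous q3 := by rw [hq3def]; fun_prop
  have hGcont : Continuous G := by
    rw [hGdef]
    exact continuous_glue hcq1 (continuous_glue hcq2 hcq3 hdL)
      (by rw [if_pos hL.le]; exact hd0)
  have hFcont : Continuous F := hFdiff.continuous
  have hC1 : ContDiff ℝ 1 F := contDiff_one_iff_deriv.mpr ⟨hFdiff, by rw [hderivF]; exact hGcont⟩
  -- branch values
  have hF1 : ∀ x : ℝ, x ≤ 0 → F x = p1 x := by
    intro x hx
    show (if x ≤ (0:ℝ) then p1 x else if x ≤ L then p2 x else p3 x) = p1 x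
    rw [if_pos hx]
  have hF2 : ∀ x : ℝ, ¬ x ≤ 0 → x ≤ L → F x = p2 x := by
    intro x hx hx'
    show (if x ≤ (0:ℝ) then p1 x else if x ≤ L then p2 x else p3 x) = p2 x
    rw [if_neg hx, if_pos hx']
  have hF3 : ∀ x : ℝ, ¬ x ≤ 0 → ¬ x ≤ L → F x = p3 x := by
    intro x hx hx'
    show (if x ≤ (0:ℝ) then p1 x else if x ≤ L then p2 x else p3 x) = p3 x
    rw [if_neg hx, if_neg hx']
  have hG1 : ∀ x : ℝ, x ≤ 0 → G x = q1 x := by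
    intro x hx
    show (if x ≤ (0:ℝ) then q1 x else if x ≤ L then q2 x else q3 x) = q1 x
    rw [if_pos hx]
  have hG2 : ∀ x : ℝ, ¬ x ≤ 0 → x ≤ L → G x = q2 x := by
    intro x hx hx'
    show (if x ≤ (0:ℝ) then q1 x else if x ≤ L then q2 x else q3 x) = q2 x
    rw [if_neg hx, if_pos hx']
  have hG3 : ∀ x : ℝ, ¬ x ≤ 0 → ¬ x ≤ L → G x = q3 x := by
    intro x hx hx'
    show (if x ≤ (0:ℝ) then q1 x else if x ≤ L then q2 x else q3 x) = q3 x
    rw [if_neg hx, if_neg hx']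
  -- eventual equalities
  have hev1 : ∀ x : ℝ, x < 0 → F =ᶠ[nhds x] p1 := by
    intro x hx
    filter_upwards [Iio_mem_nhds hx] with y hy
    exact hF1 y (le_of_lt (mem_Iio.mp hy))
  have hev2 : ∀ x : ℝ, 0 < x → x < L → F =ᶠ[nhds x] p2 := by
    intro x hx hx'
    filter_upwards [Ioo_mem_nhds hx hx'] with y hy
    exact hF2 y (not_le.mpr hy.1) hy.2.le
  have hev3 : ∀ x : ℝ, L < x → F =ᶠ[nhds x] p3 := by
    intro x hx
    filter_upwards [Ioi_mem_nhds hx] with y hy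
    exact hF3 y (not_le.mpr (lt_trans hL (mem_Ioi.mp hy))) (not_le.mpr (mem_Ioi.mp hy))
  have gev1 : ∀ x : ℝ, x < 0 → G =ᶠ[nhds x] q1 := by
    intro x hx
    filter_upwards [Iio_mem_nhds hx] with y hy
    exact hG1 y (le_of_lt (mem_Iio.mp hy))
  have gev2 : ∀ x : ℝ, 0 < x → x < L → G =ᶠ[nhds x] q2 := by
    intro x hx hx'
    filter_upwards [Ioo_mem_nhds hx hx'] with y hy
    exact hG2 y (not_le.mpr hy.1) hy.2.le
  have gev3 : ∀ x : ℝ, L < x → G =ᶠ[nhds x] q3 := by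
    intro x hx
    filter_upwards [Ioi_mem_nhds hx] with y hy
    exact hG3 y (not_le.mpr (lt_trans hL (mem_Ioi.mp hy))) (not_le.mpr (mem_Ioi.mp hy))
  -- smoothness of pieces
  have hcd1 : ContDiff ℝ 2 p1 := by rw [hp1def]; fun_prop
  have hcd2 : ContDiff ℝ 2 p2 := by rw [hp2def]; fun_prop
  have hcd3 : ContDiff ℝ 2 p3 := by rw [hp3def]; fun_prop
  refine ⟨F, hC1, ?_, ?_, ?_, ?_, ?_, ?_, ?_⟩
  · -- Memℒp F 2
    refine (memLp_two_iff_integrable_sq hFcont.aestronglyMeasurable).mpr ?_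
    rw [← integrableOn_univ, ← Iic_union_Ioi (a := (0:ℝ))]
    apply IntegrableOn.union
    · refine (st15_tail_left (M/(r*(r-s)) * (1 - Real.exp (-(r*L)))) r hr).congr_fun
        (fun x hx => ?_) measurableSet_Iic
      rw [hF1 x (mem_Iic.mp hx), hp1def]
    · rw [← Ioc_union_Ioi_eq_Ioi hL.le]
      apply IntegrableOn.union
      · exact (hFcont.pow 2).integrableOn_Ioc
      · refine (st15_tail_right (M/((-s)*(r-s)) * (1 - Real.exp (s*L))) s (s*L) L hs).congr_fun
          (fun x hx => ?_) measurableSet_Ioi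
        rw [hF3 x (not_le.mpr (lt_trans hL (mem_Ioi.mp hx))) (not_le.mpr (mem_Ioi.mp hx)), hp3def]
  · -- Memℒp (deriv F) 2
    rw [hderivF]
    refine (memLp_two_iff_integrable_sq hGcont.aestronglyMeasurable).mpr ?_
    rw [← integrableOn_univ, ← Iic_union_Ioi (a := (0:ℝ))]
    apply IntegrableOn.union
    · refine (st15_tail_left (M/(r-s) * (1 - Real.exp (-(r*L)))) r hr).congr_fun
        (fun x hx => ?_) measurableSet_Iic
      rw [hG1 x (mem_Iic.mp hx), hq1def]
    · rw [← Ioc_union_Ioi_eq_Ioi hL.le]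
      apply IntegrableOn.union
      · exact (hGcont.pow 2).integrableOn_Ioc
      · refine (st15_tail_right (-(M/(r-s)) * (1 - Real.exp (s*L))) s (s*L) L hs).congr_fun
          (fun x hx => ?_) measurableSet_Ioi
        rw [hG3 x (not_le.mpr (lt_trans hL (mem_Ioi.mp hx))) (not_le.mpr (mem_Ioi.mp hx)), hq3def]
  · -- ODE
    intro x hx0 hxL
    rw [hderivF]
    rcases lt_trichotomy x 0 with h1 | h1 | h1
    · refine ⟨hcd1.contDiffAt.congr_of_eventuallyEq (hev1 x h1), ?_⟩
      have hq1' : HasDerivAt q1 (M/(r-s) * (1 - Real.exp (-(r*L))) * (r * Real.exp (r*x))) x := by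
        rw [hq1def]
        exact (hasDerivAt_exp_mul r x).const_mul _
      have hGq : deriv G x = M/(r-s) * (1 - Real.exp (-(r*L))) * (r * Real.exp (r*x)) :=
        (((gev1 x h1).hasDerivAt_iff).mpr hq1').deriv
      rw [hGq, hG1 x h1.le, hF1 x h1.le,
        Set.indicator_of_notMem (fun h => absurd h.1 (not_lt.mpr h1.le))]
      simp only [hq1def, hp1def]
      rw [hc2, hmu2]
      field_simp
      ring
    · exact absurd h1 hx0
    · rcases lt_trichotomy x L with h2 | h2 | h2
      · refine ⟨hcd2.contDiffAt.congr_of_eventuallyEq (hev2 x h1 h2), ?_⟩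
        have hq2' : HasDerivAt q2
            (M/(r-s) * (s * Real.exp (s*x)) - M/(r-s) * (r * Real.exp (r*x - r*L))) x := by
          rw [hq2def]
          exact ((hasDerivAt_exp_mul s x).const_mul (M/(r-s))).sub
            ((hasDerivAt_exp_lin r (r*L) x).const_mul (M/(r-s)))
        have hGq : deriv G x
            = M/(r-s) * (s * Real.exp (s*x)) - M/(r-s) * (r * Real.exp (r*x - r*L)) :=
          (((gev2 x h1 h2).hasDerivAt_iff).mpr hq2').deriv
        have hmem : x ∈ Set.Ioo (0:ℝ) L := ⟨h1, h2⟩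
        have hind : (Set.Ioo (0:ℝ) L).indicator (fun _ => M) x = M :=
          Set.indicator_of_mem hmem _
        rw [hGq, hG2 x (not_le.mpr h1) h2.le, hF2 x (not_le.mpr h1) h2.le, hind]
        simp only [hq2def, hp2def]
        rw [hc2, hmu2]
        field_simp
        ring
      · exact absurd h2 hxL
      · refine ⟨hcd3.contDiffAt.congr_of_eventuallyEq (hev3 x h2), ?_⟩
        have hq3' : HasDerivAt q3
            (-(M/(r-s)) * (1 - Real.exp (s*L)) * (s * Real.exp (s*x - s*L))) x := by
          rw [hq3def]
          exact (hasDerivAt_exp_lin s (s*L) x).const_mul _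
        have hGq : deriv G x = -(M/(r-s)) * (1 - Real.exp (s*L)) * (s * Real.exp (s*x - s*L)) :=
          (((gev3 x h2).hasDerivAt_iff).mpr hq3').deriv
        rw [hGq, hG3 x (not_le.mpr (lt_trans hL h2)) (not_le.mpr h2),
          hF3 x (not_le.mpr (lt_trans hL h2)) (not_le.mpr h2),
          Set.indicator_of_notMem (fun h => absurd h.2 (not_lt.mpr h2.le))]
        simp only [hq3def, hp3def]
        rw [hc2, hmu2]
        field_simp
        ring
  · -- bounds
    intro x
    have hMx : M / μs = M / (-(r*s)) := by rw [hmu2]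
    by_cases hx0 : x ≤ 0
    · rw [hF1 x hx0]
      simp only [hp1def]
      have hE1 : Real.exp (-(r*L)) < 1 := Real.exp_lt_one_iff.mpr (by nlinarith)
      have hE1p : 0 < Real.exp (-(r*L)) := Real.exp_pos _
      have hE2 : Real.exp (r*x) ≤ 1 := Real.exp_le_one_iff.mpr (by nlinarith)
      have hE2p : 0 < Real.exp (r*x) := Real.exp_pos _
      have hC : 0 < M/(r*(r-s)) := div_pos hM (mul_pos hr hd)
      constructor
      · exact mul_nonneg (mul_nonneg hC.le (by linarith)) hE2p.le
      · rw [hMx]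
        have key : M/(r*(r-s)) ≤ M/(-(r*s)) := by
          rw [div_le_div_iff₀ (mul_pos hr hd) (by nlinarith)]
          nlinarith [mul_pos hM (mul_pos hr hr)]
        have h1 : M/(r*(r-s)) * (1 - Real.exp (-(r*L))) * Real.exp (r*x) ≤ M/(r*(r-s)) := by
          nlinarith [mul_nonneg (mul_nonneg hC.le (by linarith : (0:ℝ) ≤ 1 - Real.exp (-(r*L))))
              (by linarith : (0:ℝ) ≤ 1 - Real.exp (r*x)),
            mul_nonneg hC.le hE1p.le]
        linarith
    · have hx0' : (0:ℝ) < x := not_le.mp hx0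
      by_cases hxL : x ≤ L
      · rw [hF2 x hx0 hxL]
        simp only [hp2def]
        have hu : Real.exp (s*x) ≤ 1 := Real.exp_le_one_iff.mpr (by nlinarith)
        have hup : 0 < Real.exp (s*x) := Real.exp_pos _
        have hv : Real.exp (r*x - r*L) ≤ 1 := Real.exp_le_one_iff.mpr (by nlinarith)
        have hvp : 0 < Real.exp (r*x - r*L) := Real.exp_pos _
        have hC1 : 0 < M/((-s)*(r-s)) := div_pos hM (mul_pos (by linarith) hd)
        have hC2 : 0 < M/(r*(r-s)) := div_pos hM (mul_pos hr hd)
        have hsumK : M/((-s)*(r-s)) + M/(r*(r-s)) = M/(-(r*s)) := by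
          field_simp
          ring
        constructor
        · have t1 : 0 ≤ M/((-s)*(r-s)) * (1 - Real.exp (s*x)) := mul_nonneg hC1.le (by linarith)
          have t2 : 0 ≤ M/(r*(r-s)) * (1 - Real.exp (r*x - r*L)) := mul_nonneg hC2.le (by linarith)
          linarith
        · rw [hMx, ← hsumK]
          have t1 : M/((-s)*(r-s)) * (1 - Real.exp (s*x)) ≤ M/((-s)*(r-s)) := by nlinarith
          have t2 : M/(r*(r-s)) * (1 - Real.exp (r*x - r*L)) ≤ M/(r*(r-s)) := by nlinarith
          linarith
      · rw [hF3 x hx0 hxL]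
        simp only [hp3def]
        have hxL' : L < x := not_le.mp hxL
        have hE1 : Real.exp (s*L) < 1 := Real.exp_lt_one_iff.mpr (by nlinarith)
        have hE1p : 0 < Real.exp (s*L) := Real.exp_pos _
        have hE2 : Real.exp (s*x - s*L) ≤ 1 := Real.exp_le_one_iff.mpr (by nlinarith)
        have hE2p : 0 < Real.exp (s*x - s*L) := Real.exp_pos _
        have hC : 0 < M/((-s)*(r-s)) := div_pos hM (mul_pos (by linarith) hd)
        constructor
        · exact mul_nonneg (mul_nonneg hC.le (by linarith)) hE2p.le
        · rw [hMx]
          have key : M/((-s)*(r-s)) ≤ M/(-(r*s)) := by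
            rw [div_le_div_iff₀ (mul_pos (by linarith : (0:ℝ) < -s) hd) (by nlinarith)]
            nlinarith [mul_pos hM (mul_pos_of_neg_of_neg hs hs)]
          have h1 : M/((-s)*(r-s)) * (1 - Real.exp (s*L)) * Real.exp (s*x - s*L)
              ≤ M/((-s)*(r-s)) := by
            nlinarith [mul_nonneg (mul_nonneg hC.le (by linarith : (0:ℝ) ≤ 1 - Real.exp (s*L)))
                (by linarith : (0:ℝ) ≤ 1 - Real.exp (s*x - s*L)),
              mul_nonneg hC.le hE1p.le]
          linarith
  · -- limit at -∞
    have h1 : Tendsto (fun x : ℝ => r*x) atBot atBot := tendsto_id.const_mul_atBot hr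
    have h2 : Tendsto (fun x : ℝ => Real.exp (r*x)) atBot (nhds 0) :=
      Real.tendsto_exp_atBot.comp h1
    have h3 := h2.const_mul (M/(r*(r-s)) * (1 - Real.exp (-(r*L))))
    rw [mul_zero] at h3
    refine h3.congr' ?_
    filter_upwards [eventually_le_atBot (0:ℝ)] with y hy
    exact (hF1 y hy).symm
  · -- limit at +∞
    have h1' : Tendsto (fun x : ℝ => s*x - s*L) atTop atBot := by
      have h0 : Tendsto (fun x : ℝ => s * id x) atTop atBot :=
        tendsto_id.const_mul_atTop_of_neg hs
      exact (tendsto_atBot_add_const_right atTop (-(s*L)) h0).congr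
        (fun x => by simp only [id_eq]; ring)
    have h2 : Tendsto (fun x : ℝ => Real.exp (s*x - s*L)) atTop (nhds 0) :=
      Real.tendsto_exp_atBot.comp h1'
    have h3 := h2.const_mul (M/((-s)*(r-s)) * (1 - Real.exp (s*L)))
    rw [mul_zero] at h3
    refine h3.congr' ?_
    filter_upwards [eventually_gt_atTop L] with y hy
    exact (hF3 y (not_le.mpr (lt_trans hL hy)) (not_le.mpr hy)).symm
  · -- monotonicity
    have hx0L : 0 < r*L/(r-s) := div_pos (mul_pos hr hL) hd
    have hxLL : r*L/(r-s) < L := by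
      rw [div_lt_iff₀ hd]
      nlinarith
    have hMd : 0 < M/(r-s) := div_pos hM hd
    refine ⟨r*L/(r-s), ⟨hx0L, hxLL⟩, ?_, ?_⟩
    · apply strictMonoOn_of_deriv_pos (convex_Iio _) hFcont.continuousOn
      intro x hx
      rw [interior_Iio] at hx
      have hx' : x < r*L/(r-s) := mem_Iio.mp hx
      rw [hderivF]
      by_cases hx0 : x ≤ 0
      · rw [hG1 x hx0, hq1def]
        have hE1 : Real.exp (-(r*L)) < 1 := Real.exp_lt_one_iff.mpr (by nlinarith)
        exact mul_pos (mul_pos hMd (by linarith)) (Real.exp_pos _)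
      · rw [hG2 x hx0 (le_of_lt (lt_trans hx' hxLL)), hq2def]
        have hlt : r*x - r*L < s*x := by
          have h := (lt_div_iff₀ hd).mp hx'
          nlinarith
        have hexp : Real.exp (r*x - r*L) < Real.exp (s*x) := Real.exp_lt_exp.mpr hlt
        show 0 < M/(r-s) * Real.exp (s*x) - M/(r-s) * Real.exp (r*x - r*L)
        nlinarith
    · apply strictAntiOn_of_deriv_neg (convex_Ioi _) hFcont.continuousOn
      intro x hx
      rw [interior_Ioi] at hx
      have hx' : r*L/(r-s) < x := mem_Ioi.mp hx
      rw [hderivF]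
      have hx0 : ¬ x ≤ 0 := not_le.mpr (lt_trans hx0L hx')
      by_cases hxL : x ≤ L
      · rw [hG2 x hx0 hxL, hq2def]
        have hlt : s*x < r*x - r*L := by
          have h := (div_lt_iff₀ hd).mp hx'
          nlinarith
        have hexp : Real.exp (s*x) < Real.exp (r*x - r*L) := Real.exp_lt_exp.mpr hlt
        show M/(r-s) * Real.exp (s*x) - M/(r-s) * Real.exp (r*x - r*L) < 0
        nlinarith
      · rw [hG3 x hx0 hxL, hq3def]
        have hE : Real.exp (s*L) < 1 := Real.exp_lt_one_iff.mpr (by nlinarith)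
        show -(M/(r-s)) * (1 - Real.exp (s*L)) * Real.exp (s*x - s*L) < 0
        have := mul_pos (mul_pos hMd (by linarith : (0:ℝ) < 1 - Real.exp (s*L)))
          (Real.exp_pos (s*x - s*L))
        nlinarith
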